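/- arXiv:2306.02745 — 5 statements merged into one kernel-verified Lean document; each statement's English description precedes it below -/
import Mathlib

section
/- Let {A_n} be a sequence of densely defined closed operators on a Hilbert space H, and A a densely defined closed operator. If Gr(A) is contained in the strong limit Γ_∞ of {Gr(A_n)}, then the strong limit Γ_∞* of {Gr(A_n*)} is contained in Gr(A*). -/
open Filter Topology
open scoped LinearPMap

/-- The strong limit of a sequence of subspaces of a topological module. -/
def strongLimit {R M : Type*} [Ring R] [AddCommGroup M] [Module R M] [TopologicalSpace M]
    (V : ℕ → Submodule R M) : Set M :=
  {x | ∃ u : ℕ → M, (∀ n, u n ∈ V n) ∧ Tendsto u atTop (𝓝 x)}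

theorem stmt4 {H : Type*} [NormedAddCommGroup H] [InnerProductSpace ℂ H] [CompleteSpace H]
    (A : ℕ → (H →ₗ.[ℂ] H)) (hAdense : ∀ n, Dense ((A n).domain : Set H))
    (hAclosed : ∀ n, IsClosed ((A n).graph : Set (H × H)))
    (B : H →ₗ.[ℂ] H) (hBdense : Dense (B.domain : Set H))
    (hBclosed : IsClosed (B.graph : Set (H × H)))
    (h : (B.graph : Set (H × H)) ⊆ strongLimit (fun n => (A n).graph)) :
    strongLimit (fun n => ((A n)†).graph) ⊆ ((B†).graph : Set (H × H)) := by
  rintro ⟨φ, ψ⟩ ⟨u, hu, hulim⟩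
  -- Key pointwise identity
  have key : ∀ x : B.domain, (inner ℂ ψ (x : H) : ℂ) = inner ℂ φ (B x) := by
    intro x
    have hx : ((x : H), B x) ∈ (B.graph : Set (H × H)) := B.mem_graph x
    obtain ⟨v, hv, hvlim⟩ := h hx
    have step : ∀ n, (inner ℂ (u n).2 (v n).1 : ℂ) = inner ℂ (u n).1 (v n).2 := by
      intro n
      obtain ⟨y, hy1, hy2⟩ := ((A n)†).mem_graph_iff.mp (hu n)
      obtain ⟨z, hz1, hz2⟩ := (A n).mem_graph_iff.mp (hv n)
      rw [← hy1, ← hy2, ← hz1, ← hz2]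
      exact LinearPMap.adjoint_isFormalAdjoint (hAdense n) y z
    have l1 : Tendsto (fun n => (inner ℂ (u n).2 (v n).1 : ℂ)) atTop (𝓝 (inner ℂ ψ (x : H))) := by
      have h1 : Tendsto (fun n => (u n).2) atTop (𝓝 ψ) :=
        (continuous_snd.tendsto _).comp hulim
      have h2 : Tendsto (fun n => (v n).1) atTop (𝓝 (x : H)) :=
        (continuous_fst.tendsto _).comp hvlim
      exact Tendsto.inner h1 h2
    have l2 : Tendsto (fun n => (inner ℂ (u n).1 (v n).2 : ℂ)) atTop (𝓝 (inner ℂ φ (B x))) := by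
      have h1 : Tendsto (fun n => (u n).1) atTop (𝓝 φ) :=
        (continuous_fst.tendsto _).comp hulim
      have h2 : Tendsto (fun n => (v n).2) atTop (𝓝 (B x)) :=
        (continuous_snd.tendsto _).comp hvlim
      exact Tendsto.inner h1 h2
    exact tendsto_nhds_unique (by simpa only [step] using l1) l2
  have hφ : φ ∈ (B†).domain :=
    LinearPMap.mem_adjoint_domain_of_exists φ ⟨ψ, key⟩
  exact SetLike.mem_coe.mpr ((B†).mem_graph_iff.mpr
    ⟨⟨φ, hφ⟩, rfl, LinearPMap.adjoint_apply_eq hBdense _ key⟩)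
end

section
/- Let {A_n} be a sequence of densely defined closed operators and A densely defined closed. If Gr(A) ⊆ Γ_∞ and Gr(A*) ⊆ Γ_∞*, then Gr(A) = Γ_∞ and Gr(A*) = Γ_∞*. -/
open Filter Topology
open scoped LinearPMap

theorem stmt5 {H : Type*} [NormedAddCommGroup H] [InnerProductSpace ℂ H] [CompleteSpace H]
    (A : ℕ → (H →ₗ.[ℂ] H)) (hAdense : ∀ n, Dense ((A n).domain : Set H))
    (hAclosed : ∀ n, IsClosed ((A n).graph : Set (H × H)))
    (B : H →ₗ.[ℂ] H) (hBdense : Dense (B.domain : Set H))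
    (hBclosed : IsClosed (B.graph : Set (H × H)))
    (h : (B.graph : Set (H × H)) ⊆ strongLimit (fun n => (A n).graph))
    (hadj : ((B†).graph : Set (H × H)) ⊆ strongLimit (fun n => ((A n)†).graph)) :
    (B.graph : Set (H × H)) = strongLimit (fun n => (A n).graph) ∧
      ((B†).graph : Set (H × H)) = strongLimit (fun n => ((A n)†).graph) := by
  -- Key limit relation: for `p ∈ Γ∞` and `q ∈ Γ∞*`, `⟪q.2, p.1⟫ = ⟪q.1, p.2⟫`.
  have key : ∀ p ∈ strongLimit (fun n => (A n).graph),
      ∀ q ∈ strongLimit (fun n => ((A n)†).graph),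
      (inner ℂ q.2 p.1 : ℂ) = inner ℂ q.1 p.2 := by
    rintro p ⟨u, hu, hul⟩ q ⟨v, hv, hvl⟩
    have hu1 : Tendsto (fun n => (u n).1) atTop (𝓝 p.1) :=
      (continuous_fst.tendsto p).comp hul
    have hu2 : Tendsto (fun n => (u n).2) atTop (𝓝 p.2) :=
      (continuous_snd.tendsto p).comp hul
    have hv1 : Tendsto (fun n => (v n).1) atTop (𝓝 q.1) :=
      (continuous_fst.tendsto q).comp hvl
    have hv2 : Tendsto (fun n => (v n).2) atTop (𝓝 q.2) :=
      (continuous_snd.tendsto q).comp hvl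
    have heq : ∀ n, (inner ℂ (v n).2 (u n).1 : ℂ) = inner ℂ (v n).1 (u n).2 := by
      intro n
      obtain ⟨x, hx1, hx2⟩ := (LinearPMap.mem_graph_iff _).mp (hu n)
      obtain ⟨y, hy1, hy2⟩ := (LinearPMap.mem_graph_iff _).mp (hv n)
      rw [← hx1, ← hx2, ← hy1, ← hy2]
      exact LinearPMap.adjoint_isFormalAdjoint (hAdense n) y x
    exact tendsto_nhds_unique ((hv2.inner hu1).congr heq) (hv1.inner hu2)
  -- Second conjunct: `Γ∞* ⊆ Gr(B†)`.
  have hadj' : strongLimit (fun n => ((A n)†).graph) ⊆ ((B†).graph : Set (H × H)) := by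
    intro p hp
    have hrel : ∀ x : B.domain, (inner ℂ p.2 (x : H) : ℂ) = inner ℂ p.1 (B x) := by
      intro x
      exact key (↑x, B x) (h (B.mem_graph x)) p hp
    have hmem : p.1 ∈ (B†).domain :=
      B.mem_adjoint_domain_of_exists p.1 ⟨p.2, fun x => hrel x⟩
    have hval : (B†) ⟨p.1, hmem⟩ = p.2 :=
      LinearPMap.adjoint_apply_eq hBdense ⟨p.1, hmem⟩ fun x => (hrel x).symm ▸ rfl
    have := (B†).mem_graph ⟨p.1, hmem⟩
    rwa [hval, Prod.mk.eta] at this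
  -- First conjunct: `Γ∞ ⊆ Gr(B)` via double orthogonal complement in `WithLp 2 (H × H)`.
  have h' : strongLimit (fun n => (A n).graph) ⊆ (B.graph : Set (H × H)) := by
    intro p hp
    set e := WithLp.prodContinuousLinearEquiv 2 ℂ H H with he
    set K : Submodule ℂ (WithLp 2 (H × H)) :=
      B.graph.comap (e : WithLp 2 (H × H) →ₗ[ℂ] H × H) with hK
    have hKclosed : IsClosed (K : Set (WithLp 2 (H × H))) := by
      have : (K : Set (WithLp 2 (H × H))) = e ⁻¹' (B.graph : Set (H × H)) := rfl
      rw [this]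
      exact hBclosed.preimage e.continuous
    have hz : e.symm p ∈ Kᗮᗮ := by
      rw [Submodule.mem_orthogonal]
      intro w hw
      rw [Submodule.mem_orthogonal] at hw
      set a := (e w).1 with ha
      set b := (e w).2 with hb
      -- For all `x ∈ D(B)`: `⟪x, a⟫ + ⟪B x, b⟫ = 0`.
      have h0 : ∀ x : B.domain, (inner ℂ (x : H) a : ℂ) + inner ℂ (B x) b = 0 := by
        intro x
        have hg : e.symm (↑x, B x) ∈ K := by
          simp only [hK, Submodule.mem_comap, ContinuousLinearEquiv.coe_coe,
            ContinuousLinearEquiv.apply_symm_apply]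
          exact B.mem_graph x
        have := hw _ hg
        rwa [WithLp.prod_inner_apply] at this
      have h0' : ∀ x : B.domain, (inner ℂ b (B x) : ℂ) = inner ℂ (-a) (x : H) := by
        intro x
        have := congrArg (starRingEnd ℂ) (h0 x)
        simp only [map_add, inner_conj_symm, map_zero] at this
        rw [inner_neg_left]
        linear_combination this
      have hbmem : b ∈ (B†).domain :=
        B.mem_adjoint_domain_of_exists b ⟨-a, fun x => (h0' x).symm⟩
      have hval : (B†) ⟨b, hbmem⟩ = -a :=
        LinearPMap.adjoint_apply_eq hBdense ⟨b, hbmem⟩ fun x => (h0' x).symm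
      have hbg : (b, -a) ∈ (B†).graph := by
        have := (B†).mem_graph ⟨b, hbmem⟩
        rwa [hval] at this
      have hrel : (inner ℂ (-a) p.1 : ℂ) = inner ℂ b p.2 := key p hp (b, -a) (hadj hbg)
      rw [inner_neg_left] at hrel
      have : (inner ℂ a p.1 : ℂ) + inner ℂ b p.2 = 0 := by linear_combination -hrel
      rw [WithLp.prod_inner_apply]
      exact this
    rw [Submodule.orthogonal_orthogonal_eq_closure,
      hKclosed.submodule_topologicalClosure_eq] at hz
    have : e (e.symm p) ∈ B.graph := hz
    rwa [ContinuousLinearEquiv.apply_symm_apply] at this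
  exact ⟨Set.Subset.antisymm h h',
    Set.Subset.antisymm hadj hadj'⟩
end

section
/- Let {A_n} be a sequence of densely defined closed symmetric operators and A a self-adjoint operator. Then A is the strong graph limit of the A_n (i.e. Gr(A) = Γ_∞) if and only if Gr(A) ⊆ Γ_∞. -/
open Filter Topology
open scoped LinearPMap InnerProductSpace

/-- A partially defined operator is symmetric. -/
def IsSymmetricOp {H : Type*} [NormedAddCommGroup H] [InnerProductSpace ℂ H]
    (T : H →ₗ.[ℂ] H) : Prop :=
  ∀ x y : T.domain, ⟪T x, (y : H)⟫_ℂ = ⟪(x : H), T y⟫_ℂ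

theorem stmt6 {H : Type*} [NormedAddCommGroup H] [InnerProductSpace ℂ H] [CompleteSpace H]
    (A : ℕ → (H →ₗ.[ℂ] H)) (hAdense : ∀ n, Dense ((A n).domain : Set H))
    (hAclosed : ∀ n, IsClosed ((A n).graph : Set (H × H)))
    (hAsymm : ∀ n, IsSymmetricOp (A n))
    (B : H →ₗ.[ℂ] H) (hBsa : IsSelfAdjoint B) :
    (B.graph : Set (H × H)) = strongLimit (fun n => (A n).graph) ↔
      (B.graph : Set (H × H)) ⊆ strongLimit (fun n => (A n).graph) := by
  constructor
  · intro h; exact h.subset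
  · intro hsub
    refine Set.Subset.antisymm hsub ?_
    rintro ⟨φ, ψ⟩ ⟨u, hu, hlim⟩
    -- component limits
    have hu1 : Tendsto (fun n => (u n).1) atTop (𝓝 φ) :=
      (continuous_fst.tendsto _).comp hlim
    have hu2 : Tendsto (fun n => (u n).2) atTop (𝓝 ψ) :=
      (continuous_snd.tendsto _).comp hlim
    -- key claim
    have key : ∀ x : B.domain, ⟪ψ, (x : H)⟫_ℂ = ⟪φ, B x⟫_ℂ := by
      intro x
      obtain ⟨v, hv, hvlim⟩ := hsub (B.mem_graph x)
      have hv1 : Tendsto (fun n => (v n).1) atTop (𝓝 (x : H)) :=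
        (continuous_fst.tendsto _).comp hvlim
      have hv2 : Tendsto (fun n => (v n).2) atTop (𝓝 (B x)) :=
        (continuous_snd.tendsto _).comp hvlim
      have heq : ∀ n, ⟪(u n).2, (v n).1⟫_ℂ = ⟪(u n).1, (v n).2⟫_ℂ := by
        intro n
        obtain ⟨a, ha1, ha2⟩ := (LinearPMap.mem_graph_iff _).mp (hu n)
        obtain ⟨b, hb1, hb2⟩ := (LinearPMap.mem_graph_iff _).mp (hv n)
        rw [← ha1, ← ha2, ← hb1, ← hb2]
        exact hAsymm n a b
      have t1 : Tendsto (fun n => ⟪(u n).2, (v n).1⟫_ℂ) atTop (𝓝 ⟪ψ, (x : H)⟫_ℂ) :=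
        hu2.inner hv1
      have t2 : Tendsto (fun n => ⟪(u n).1, (v n).2⟫_ℂ) atTop (𝓝 ⟪φ, B x⟫_ℂ) :=
        hu1.inner hv2
      exact tendsto_nhds_unique (t1.congr heq) t2
    -- hence (φ, ψ) ∈ B†.graph = B.graph
    have hφ : φ ∈ B†.domain :=
      LinearPMap.mem_adjoint_domain_of_exists φ ⟨ψ, fun x => key x⟩
    have hψ : B† ⟨φ, hφ⟩ = ψ :=
      LinearPMap.adjoint_apply_eq hBsa.dense_domain ⟨φ, hφ⟩ fun x => key x
    have hmem : (φ, ψ) ∈ B†.graph := by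
      rw [LinearPMap.mem_graph_iff]
      exact ⟨⟨φ, hφ⟩, rfl, hψ⟩
    have : B† = B := hBsa
    rwa [this] at hmem
end

section
/- Let {A_n} be densely defined closed operators and A densely defined closed, with P_n, P the orthogonal projections in H ⊕ H onto Gr(A_n), Gr(A) respectively. Then P_n → P strongly if and only if Gr(A) ⊆ Γ_∞ and Gr(A*) ⊆ Γ_∞*. -/
open Filter Topology
open scoped LinearPMap InnerProductSpace

/-- `P` is the orthogonal projection onto the subspace `G` of `H ⊕ H`, with respect to
the direct sum inner product `⟪u, v⟫ = ⟪u.1, v.1⟫ + ⟪u.2, v.2⟫`. -/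
def IsGraphOrthProj {H : Type*} [NormedAddCommGroup H] [InnerProductSpace ℂ H]
    (G : Submodule ℂ (H × H)) (P : (H × H) →L[ℂ] (H × H)) : Prop :=
  ∀ w : H × H, P w ∈ G ∧ ∀ v ∈ G, ⟪(w - P w).1, v.1⟫_ℂ + ⟪(w - P w).2, v.2⟫_ℂ = 0

section Aux

variable {H : Type*} [NormedAddCommGroup H] [InnerProductSpace ℂ H]

private lemma pair_eq_zero {a b : H} (h : ⟪a, a⟫_ℂ + ⟪b, b⟫_ℂ = 0) : a = 0 ∧ b = 0 := by
  have hre := congrArg (RCLike.re (K := ℂ)) h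
  rw [map_add, map_zero] at hre
  have ha0 : 0 ≤ RCLike.re ⟪a, a⟫_ℂ := inner_self_nonneg (𝕜 := ℂ)
  have hb0 : 0 ≤ RCLike.re ⟪b, b⟫_ℂ := inner_self_nonneg (𝕜 := ℂ)
  have ha : RCLike.re ⟪a, a⟫_ℂ ≤ 0 := by linarith
  have hb : RCLike.re ⟪b, b⟫_ℂ ≤ 0 := by linarith
  exact ⟨re_inner_self_nonpos.mp ha, re_inner_self_nonpos.mp hb⟩

private lemma proj_fixed {G : Submodule ℂ (H × H)} {P : (H × H) →L[ℂ] (H × H)}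
    (h : IsGraphOrthProj G P) {w : H × H} (hw : w ∈ G) : P w = w := by
  have h2 := (h w).2 (w - P w) (Submodule.sub_mem G hw (h w).1)
  obtain ⟨h1', h2'⟩ := pair_eq_zero h2
  have : w - P w = 0 := Prod.ext h1' h2'
  have := sub_eq_zero.mp this
  exact this.symm

private lemma proj_zero {G : Submodule ℂ (H × H)} {P : (H × H) →L[ℂ] (H × H)}
    (h : IsGraphOrthProj G P) {w : H × H}
    (hw : ∀ v ∈ G, ⟪w.1, v.1⟫_ℂ + ⟪w.2, v.2⟫_ℂ = 0) : P w = 0 := by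
  have h1 := (h w).2 (P w) (h w).1
  have h2 := hw (P w) (h w).1
  rw [Prod.fst_sub, Prod.snd_sub, inner_sub_left, inner_sub_left] at h1
  have h3 : ⟪(P w).1, (P w).1⟫_ℂ + ⟪(P w).2, (P w).2⟫_ℂ = 0 := by
    linear_combination h2 - h1
  obtain ⟨h1', h2'⟩ := pair_eq_zero h3
  exact Prod.ext h1' h2'

private lemma proj_norm_le {G : Submodule ℂ (H × H)} {P : (H × H) →L[ℂ] (H × H)}
    (h : IsGraphOrthProj G P) (w : H × H) : ‖P w‖ ≤ Real.sqrt 2 * ‖w‖ := by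
  have hc := (h w).2 (P w) (h w).1
  have key : ‖(P w).1‖ ^ 2 + ‖(P w).2‖ ^ 2 ≤ ‖w.1‖ ^ 2 + ‖w.2‖ ^ 2 := by
    have e1 := @norm_add_sq ℂ _ _ _ _ (w - P w).1 (P w).1
    have e2 := @norm_add_sq ℂ _ _ _ _ (w - P w).2 (P w).2
    have f1 : (w - P w).1 + (P w).1 = w.1 := by simp
    have f2 : (w - P w).2 + (P w).2 = w.2 := by simp
    rw [f1] at e1; rw [f2] at e2
    have hre : RCLike.re ⟪(w - P w).1, (P w).1⟫_ℂ + RCLike.re ⟪(w - P w).2, (P w).2⟫_ℂ = 0 := by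
      rw [← map_add, hc]; simp
    nlinarith [sq_nonneg ‖(w - P w).1‖, sq_nonneg ‖(w - P w).2‖]
  have hsq : ‖P w‖ ^ 2 ≤ (Real.sqrt 2 * ‖w‖) ^ 2 := by
    have hmax : ‖P w‖ ^ 2 ≤ ‖(P w).1‖ ^ 2 + ‖(P w).2‖ ^ 2 := by
      rw [Prod.norm_def]
      rcases le_total ‖(P w).1‖ ‖(P w).2‖ with hle | hle
      · rw [max_eq_right hle]; nlinarith [norm_nonneg (P w).1]
      · rw [max_eq_left hle]; nlinarith [norm_nonneg (P w).2]
    have hw1 : ‖w.1‖ ≤ ‖w‖ := norm_fst_le w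
    have hw2 : ‖w.2‖ ≤ ‖w‖ := norm_snd_le w
    rw [mul_pow, Real.sq_sqrt (by norm_num : (2:ℝ) ≥ 0)]
    nlinarith [norm_nonneg w.1, norm_nonneg w.2, norm_nonneg w]
  calc ‖P w‖ = Real.sqrt (‖P w‖ ^ 2) := (Real.sqrt_sq (norm_nonneg _)).symm
    _ ≤ Real.sqrt ((Real.sqrt 2 * ‖w‖) ^ 2) := Real.sqrt_le_sqrt hsq
    _ = Real.sqrt 2 * ‖w‖ := Real.sqrt_sq (by positivity)

variable [CompleteSpace H]

private lemma mem_adj_graph_of_orth {T : H →ₗ.[ℂ] H} (hT : Dense (T.domain : Set H))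
    {w : H × H} (hw : ∀ v ∈ T.graph, ⟪w.1, v.1⟫_ℂ + ⟪w.2, v.2⟫_ℂ = 0) :
    (w.2, -w.1) ∈ (T†).graph := by
  have key : ∀ x : T.domain, ⟪-w.1, (x : H)⟫_ℂ = ⟪w.2, T x⟫_ℂ := by
    intro x
    have h := hw ((x : H), T x) (T.mem_graph x)
    rw [inner_neg_left]
    linear_combination -h
  have hmem : w.2 ∈ (T†).domain :=
    LinearPMap.mem_adjoint_domain_of_exists w.2 ⟨-w.1, key⟩
  have happ : T† ⟨w.2, hmem⟩ = -w.1 := LinearPMap.adjoint_apply_eq hT ⟨w.2, hmem⟩ key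
  have hg := (T†).mem_graph ⟨w.2, hmem⟩
  rwa [happ] at hg

private lemma orth_of_mem_adj_graph {T : H →ₗ.[ℂ] H} (hT : Dense (T.domain : Set H))
    {p : H × H} (hp : p ∈ (T†).graph) :
    ∀ v ∈ T.graph, ⟪-p.2, v.1⟫_ℂ + ⟪p.1, v.2⟫_ℂ = 0 := by
  intro v hv
  obtain ⟨y, hy⟩ := (T†).mem_graph_iff'.mp hp
  obtain ⟨x, hx⟩ := T.mem_graph_iff'.mp hv
  subst hy; subst hx
  have h := LinearPMap.adjoint_isFormalAdjoint hT y x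
  rw [inner_neg_left]
  linear_combination -h

private lemma tendsto_proj_zero {P : ℕ → (H × H) →L[ℂ] (H × H)} {G : ℕ → Submodule ℂ (H × H)}
    (hP : ∀ n, IsGraphOrthProj (G n) (P n)) {x : ℕ → H × H} (hx : Tendsto x atTop (𝓝 0)) :
    Tendsto (fun n => P n (x n)) atTop (𝓝 0) := by
  rw [tendsto_zero_iff_norm_tendsto_zero]
  refine squeeze_zero (fun n => norm_nonneg _) (fun n => proj_norm_le (hP n) (x n)) ?_
  have := (tendsto_const_nhds (x := Real.sqrt 2) (f := atTop (α := ℕ))).mul hx.norm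
  simpa using this

end Aux

theorem stmt8 {H : Type*} [NormedAddCommGroup H] [InnerProductSpace ℂ H] [CompleteSpace H]
    (A : ℕ → (H →ₗ.[ℂ] H)) (hAdense : ∀ n, Dense ((A n).domain : Set H))
    (hAclosed : ∀ n, IsClosed ((A n).graph : Set (H × H)))
    (B : H →ₗ.[ℂ] H) (hBdense : Dense (B.domain : Set H))
    (hBclosed : IsClosed (B.graph : Set (H × H)))
    (P : ℕ → ((H × H) →L[ℂ] (H × H))) (hP : ∀ n, IsGraphOrthProj (A n).graph (P n))
    (Q : (H × H) →L[ℂ] (H × H)) (hQ : IsGraphOrthProj B.graph Q) :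
    (∀ w : H × H, Tendsto (fun n => P n w) atTop (𝓝 (Q w))) ↔
      (B.graph : Set (H × H)) ⊆ strongLimit (fun n => (A n).graph) ∧
        ((B†).graph : Set (H × H)) ⊆ strongLimit (fun n => ((A n)†).graph) := by
  constructor
  · intro h
    constructor
    · intro w hw
      refine ⟨fun n => P n w, fun n => (hP n w).1, ?_⟩
      have hw' := h w
      rwa [proj_fixed hQ hw] at hw'
    · intro p hp
      set w : H × H := (-p.2, p.1) with hwdef
      have hQw : Q w = 0 := proj_zero hQ (orth_of_mem_adj_graph hBdense hp)
      refine ⟨fun n => ((w - P n w).2, -(w - P n w).1),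
        fun n => mem_adj_graph_of_orth (hAdense n) ((hP n w).2), ?_⟩
      have h1 : Tendsto (fun n => w - P n w) atTop (𝓝 (w - Q w)) :=
        tendsto_const_nhds.sub (h w)
      rw [hQw, sub_zero] at h1
      have h2 : Tendsto (fun n => ((w - P n w).2, -(w - P n w).1)) atTop (𝓝 (w.2, -w.1)) :=
        ((continuous_snd.tendsto w).comp h1).prodMk_nhds
          (((continuous_fst.tendsto w).comp h1).neg)
      have hep : (w.2, -w.1) = p := by simp [hwdef]
      rwa [hep] at h2
  · rintro ⟨h1, h2⟩ w
    obtain ⟨u, hu, hul⟩ := h1 (hQ w).1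
    have hmem := mem_adj_graph_of_orth hBdense (hQ w).2
    obtain ⟨v, hv, hvl⟩ := h2 hmem
    set g : ℕ → H × H := fun n => (-(v n).2, (v n).1) with hgdef
    have hg_orth : ∀ n, ∀ x ∈ (A n).graph, ⟪(g n).1, x.1⟫_ℂ + ⟪(g n).2, x.2⟫_ℂ = 0 :=
      fun n => orth_of_mem_adj_graph (hAdense n) (hv n)
    have hgl : Tendsto g atTop (𝓝 (w - Q w)) := by
      have h3 : Tendsto g atTop
          (𝓝 (-((w - Q w).2, -(w - Q w).1).2, ((w - Q w).2, -(w - Q w).1).1)) :=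
        (((continuous_snd.tendsto _).comp hvl).neg).prodMk_nhds
          ((continuous_fst.tendsto _).comp hvl)
      simpa [← Prod.mk_sub_mk] using h3
    have key : ∀ n, P n w = u n + P n (w - u n - g n) := by
      intro n
      have e : P n (w - u n - g n) = P n w - P n (u n) - P n (g n) := by
        simp only [map_sub]
      rw [e, proj_fixed (hP n) (hu n), proj_zero (hP n) (hg_orth n)]
      abel
    have hz : Tendsto (fun n => w - u n - g n) atTop (𝓝 0) := by
      have h4 := (tendsto_const_nhds (x := w) (f := atTop (α := ℕ))).sub hul |>.sub hgl
      simpa using h4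
    have hPz := tendsto_proj_zero hP hz
    have final := hul.add hPz
    rw [add_zero] at final
    exact final.congr (fun n => (key n).symm)
end

section
/- Let {B_n}, B be self-adjoint operators on H, with Q_n, Q the orthogonal projections in H ⊕ H onto Gr(B_n), Gr(B). The following are equivalent: (i) B_n → B in the strong resolvent sense; (ii) Gr(B) equals the strong limit Γ_∞^B of {Gr(B_n)}; (iii) Gr(B) ⊆ Γ_∞^B; (iv) Q_n → Q strongly. -/
open Filter Topology
open scoped InnerProductSpace

/-- `R` is the resolvent `(B + i)⁻¹` of `B`. -/
def IsResolventAtI {H : Type*} [NormedAddCommGroup H] [InnerProductSpace ℂ H]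
    (B : H →ₗ.[ℂ] H) (R : H → H) : Prop :=
  ∀ ψ : H, ∃ h : R ψ ∈ B.domain, B ⟨R ψ, h⟩ + Complex.I • R ψ = ψ

section Aux

variable {H : Type*} [NormedAddCommGroup H] [InnerProductSpace ℂ H] [CompleteSpace H]

private lemma aux_symm {B : H →ₗ.[ℂ] H} (hB : IsSelfAdjoint B) (x y : B.domain) :
    ⟪B x, (y : H)⟫_ℂ = ⟪(x : H), B y⟫_ℂ := by
  have hd : Dense (B.domain : Set H) := hB.dense_domain
  have h := LinearPMap.adjoint_isFormalAdjoint (T := B) hd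
  rw [LinearPMap.isSelfAdjoint_def] at hB
  rw [hB] at h
  exact h x y

private lemma aux_contract {B : H →ₗ.[ℂ] H} (hB : IsSelfAdjoint B) (x : B.domain) :
    ‖(x : H)‖ ≤ ‖B x + Complex.I • (x : H)‖ := by
  have hreal : (⟪B x, (x : H)⟫_ℂ).im = 0 := by
    have h1 : ⟪B x, (x : H)⟫_ℂ = ⟪(x : H), B x⟫_ℂ := aux_symm hB x x
    have h2 : (starRingEnd ℂ) ⟪B x, (x : H)⟫_ℂ = ⟪(x : H), B x⟫_ℂ :=
      inner_conj_symm (x : H) (B x)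
    have : (starRingEnd ℂ) ⟪B x, (x : H)⟫_ℂ = ⟪B x, (x : H)⟫_ℂ := by rw [h2, ← h1]
    have := congrArg Complex.im this
    simp only [Complex.conj_im] at this
    linarith
  have hre : Complex.re ⟪B x, Complex.I • (x : H)⟫_ℂ = 0 := by
    rw [inner_smul_right]
    simp [Complex.mul_re, hreal]
  have hsq := norm_add_sq (𝕜 := ℂ) (B x) (Complex.I • (x : H))
  have hn : ‖Complex.I • (x : H)‖ = ‖(x : H)‖ := by
    rw [norm_smul]; simp
  rw [hn] at hsq
  have hre' : RCLike.re ⟪B x, Complex.I • (x : H)⟫_ℂ = 0 := hre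
  rw [hre'] at hsq
  nlinarith [norm_nonneg (B x + Complex.I • (x : H)), norm_nonneg (x : H),
    sq_nonneg (‖B x‖)]

private lemma aux_res_apply {B : H →ₗ.[ℂ] H} {R : H → H} (hB : IsSelfAdjoint B)
    (hR : IsResolventAtI B R) (x : B.domain) :
    R (B x + Complex.I • (x : H)) = (x : H) := by
  obtain ⟨h, heq⟩ := hR (B x + Complex.I • (x : H))
  set ψ := B x + Complex.I • (x : H) with hψ
  have key := aux_contract hB (⟨R ψ, h⟩ - x)
  have hcoe : ((⟨R ψ, h⟩ - x : B.domain) : H) = R ψ - (x : H) := rfl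
  have hBv : B (⟨R ψ, h⟩ - x) = B ⟨R ψ, h⟩ - B x := B.toFun.map_sub _ _
  have hzero : B (⟨R ψ, h⟩ - x) + Complex.I • ((⟨R ψ, h⟩ - x : B.domain) : H) = 0 := by
    rw [hBv, hcoe, smul_sub]
    have h2 : B ⟨R ψ, h⟩ = ψ - Complex.I • R ψ := eq_sub_iff_add_eq.mpr heq
    rw [h2, hψ]
    abel
  rw [hzero] at key
  rw [hcoe] at key
  simp only [norm_zero] at key
  have := norm_le_zero_iff.mp key
  exact sub_eq_zero.mp this

private lemma aux_lip {B : H →ₗ.[ℂ] H} {R : H → H} (hB : IsSelfAdjoint B)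
    (hR : IsResolventAtI B R) (a b : H) : ‖R a - R b‖ ≤ ‖a - b‖ := by
  obtain ⟨ha, hae⟩ := hR a
  obtain ⟨hb, hbe⟩ := hR b
  have key := aux_contract hB (⟨R a, ha⟩ - ⟨R b, hb⟩)
  have hcoe : ((⟨R a, ha⟩ - ⟨R b, hb⟩ : B.domain) : H) = R a - R b := rfl
  have hBv : B (⟨R a, ha⟩ - ⟨R b, hb⟩) = B ⟨R a, ha⟩ - B ⟨R b, hb⟩ := B.toFun.map_sub _ _
  rw [hcoe] at key
  refine key.trans (le_of_eq ?_)
  congr 1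
  rw [hBv, smul_sub]
  conv_rhs => rw [← hae, ← hbe]
  abel

private lemma aux_adj {B : H →ₗ.[ℂ] H} (hB : IsSelfAdjoint B) {b c : H}
    (h : ∀ x : B.domain, ⟪b, B x⟫_ℂ = ⟪c, (x : H)⟫_ℂ) :
    (b, c) ∈ B.graph := by
  have hd : Dense (B.domain : Set H) := hB.dense_domain
  have hmem : b ∈ B.adjoint.domain :=
    LinearPMap.mem_adjoint_domain_of_exists b ⟨c, fun x => (h x).symm⟩
  have hval : B.adjoint ⟨b, hmem⟩ = c :=
    LinearPMap.adjoint_apply_eq hd _ (fun x => (h x).symm)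
  have hg : (b, c) ∈ B.adjoint.graph := by
    rw [LinearPMap.mem_graph_iff]
    exact ⟨⟨b, hmem⟩, rfl, hval⟩
  rwa [LinearPMap.isSelfAdjoint_def.mp hB] at hg

private lemma aux_perp {B : H →ₗ.[ℂ] H} (hB : IsSelfAdjoint B) (p : H × H)
    (h : ∀ v ∈ B.graph, ⟪p.1, v.1⟫_ℂ + ⟪p.2, v.2⟫_ℂ = 0) :
    (p.2, -p.1) ∈ B.graph := by
  apply aux_adj hB
  intro x
  have h1 := h (↑x, B x) (B.mem_graph x)
  simp only [inner_neg_left]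
  linear_combination h1

private lemma aux_perp' {B : H →ₗ.[ℂ] H} (hB : IsSelfAdjoint B) (η : B.domain) (v : H × H)
    (hv : v ∈ B.graph) : ⟪-(B η), v.1⟫_ℂ + ⟪(η : H), v.2⟫_ℂ = 0 := by
  obtain ⟨x, hx1, hx2⟩ := (LinearPMap.mem_graph_iff B).mp hv
  rw [← hx1, ← hx2, inner_neg_left, aux_symm hB η x]
  ring

private lemma proj_zero_of_orth {G : Submodule ℂ (H × H)} {d : H × H} (hd : d ∈ G)
    (h : ⟪d.1, d.1⟫_ℂ + ⟪d.2, d.2⟫_ℂ = 0) : d = 0 := by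
  rw [inner_self_eq_norm_sq_to_K, inner_self_eq_norm_sq_to_K] at h
  norm_cast at h
  rw [RCLike.ofReal_eq_zero] at h
  have h2 : ‖d.1‖ ^ 2 = 0 := le_antisymm (by nlinarith [sq_nonneg ‖d.2‖]) (sq_nonneg _)
  have h3 : ‖d.2‖ ^ 2 = 0 := le_antisymm (by nlinarith [sq_nonneg ‖d.1‖]) (sq_nonneg _)
  have e1 : d.1 = 0 := norm_eq_zero.mp (pow_eq_zero_iff (n := 2) (by norm_num) |>.mp h2)
  have e2 : d.2 = 0 := norm_eq_zero.mp (pow_eq_zero_iff (n := 2) (by norm_num) |>.mp h3)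
  exact Prod.ext e1 e2

private lemma proj_unique {G : Submodule ℂ (H × H)} {P : (H × H) →L[ℂ] (H × H)}
    (hP : IsGraphOrthProj G P) {w g : H × H} (hg : g ∈ G)
    (horth : ∀ v ∈ G, ⟪(w - g).1, v.1⟫_ℂ + ⟪(w - g).2, v.2⟫_ℂ = 0) : P w = g := by
  have hd : P w - g ∈ G := sub_mem (hP w).1 hg
  have hz : P w - g = 0 := by
    apply proj_zero_of_orth hd
    have h1 := horth (P w - g) hd
    have h2 := (hP w).2 (P w - g) hd
    simp only [Prod.fst_sub, Prod.snd_sub, inner_sub_left] at h1 h2 ⊢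
    linear_combination h1 - h2
  exact sub_eq_zero.mp hz

private lemma proj_fix {G : Submodule ℂ (H × H)} {P : (H × H) →L[ℂ] (H × H)}
    (hP : IsGraphOrthProj G P) {w : H × H} (hw : w ∈ G) : P w = w := by
  apply proj_unique hP hw
  intro v hv
  simp

private lemma proj_E2 {G : Submodule ℂ (H × H)} {P : (H × H) →L[ℂ] (H × H)}
    (hP : IsGraphOrthProj G P) (w : H × H) :
    ‖(P w).1‖ ^ 2 + ‖(P w).2‖ ^ 2 ≤ ‖w.1‖ ^ 2 + ‖w.2‖ ^ 2 := by
  have h0 := (hP w).2 (P w) (hP w).1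
  have hre : Complex.re ⟪(w - P w).1, (P w).1⟫_ℂ + Complex.re ⟪(w - P w).2, (P w).2⟫_ℂ = 0 := by
    have := congrArg Complex.re h0
    simpa using this
  have e1 : w.1 = (P w).1 + (w - P w).1 := by simp
  have e2 : w.2 = (P w).2 + (w - P w).2 := by simp
  have n1 := norm_add_sq (𝕜 := ℂ) ((P w).1) ((w - P w).1)
  have n2 := norm_add_sq (𝕜 := ℂ) ((P w).2) ((w - P w).2)
  have r1 : RCLike.re ⟪(P w).1, (w - P w).1⟫_ℂ = Complex.re ⟪(w - P w).1, (P w).1⟫_ℂ :=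
    inner_re_symm _ _
  have r2 : RCLike.re ⟪(P w).2, (w - P w).2⟫_ℂ = Complex.re ⟪(w - P w).2, (P w).2⟫_ℂ :=
    inner_re_symm _ _
  rw [r1] at n1
  rw [r2] at n2
  rw [← e1] at n1
  rw [← e2] at n2
  nlinarith [n1, n2, hre, sq_nonneg ‖(w - P w).1‖, sq_nonneg ‖(w - P w).2‖]

end Aux

theorem stmt11 {H : Type*} [NormedAddCommGroup H] [InnerProductSpace ℂ H] [CompleteSpace H]
    (Bn : ℕ → (H →ₗ.[ℂ] H)) (hBn : ∀ n, IsSelfAdjoint (Bn n))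
    (B : H →ₗ.[ℂ] H) (hB : IsSelfAdjoint B)
    (Rn : ℕ → H → H) (hRn : ∀ n, IsResolventAtI (Bn n) (Rn n))
    (R : H → H) (hR : IsResolventAtI B R)
    (Qn : ℕ → ((H × H) →L[ℂ] (H × H))) (hQn : ∀ n, IsGraphOrthProj (Bn n).graph (Qn n))
    (Q : (H × H) →L[ℂ] (H × H)) (hQ : IsGraphOrthProj B.graph Q) :
    List.TFAE
      [ ∀ ψ : H, Tendsto (fun n => Rn n ψ) atTop (𝓝 (R ψ)),
        (B.graph : Set (H × H)) = strongLimit (fun n => (Bn n).graph),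
        (B.graph : Set (H × H)) ⊆ strongLimit (fun n => (Bn n).graph),
        ∀ w : H × H, Tendsto (fun n => Qn n w) atTop (𝓝 (Q w)) ] := by
  tfae_have 1 → 3 := by
    intro h1 x hx
    obtain ⟨φ, hφ1, hφ2⟩ := (LinearPMap.mem_graph_iff B).mp hx
    set ψ := B φ + Complex.I • (φ : H) with hψdef
    refine ⟨fun n => (Rn n ψ, ψ - Complex.I • Rn n ψ), fun n => ?_, ?_⟩
    · obtain ⟨hm, he⟩ := hRn n ψ
      rw [LinearPMap.mem_graph_iff]
      refine ⟨⟨Rn n ψ, hm⟩, rfl, ?_⟩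
      show (Bn n) ⟨Rn n ψ, hm⟩ = ψ - Complex.I • Rn n ψ
      exact eq_sub_iff_add_eq.mpr he
    · have hRψ : R ψ = (φ : H) := aux_res_apply hB hR φ
      have hc1 : Tendsto (fun n => Rn n ψ) atTop (𝓝 ((φ : H))) := hRψ ▸ h1 ψ
      have hc2 : Tendsto (fun n => ψ - Complex.I • Rn n ψ) atTop
          (𝓝 (ψ - Complex.I • (φ : H))) := tendsto_const_nhds.sub (hc1.const_smul _)
      have heq2 : ψ - Complex.I • (φ : H) = B φ := by rw [hψdef]; abel
      rw [heq2] at hc2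
      have : x = ((φ : H), B φ) := by
        rw [Prod.ext_iff]; exact ⟨hφ1.symm, hφ2.symm⟩
      rw [this]
      exact hc1.prodMk_nhds hc2
  tfae_have 3 → 2 := by
    intro h3
    refine (Set.Subset.antisymm h3 ?_)
    rintro ⟨x1, x2⟩ ⟨u, hu, hlim⟩
    apply aux_adj hB
    intro η
    obtain ⟨s, hs, hslim⟩ := h3 (B.mem_graph η)
    have key : ∀ n, ⟪(u n).1, (s n).2⟫_ℂ = ⟪(u n).2, (s n).1⟫_ℂ := by
      intro n
      obtain ⟨p, hp1, hp2⟩ := (LinearPMap.mem_graph_iff _).mp (hu n)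
      obtain ⟨q, hq1, hq2⟩ := (LinearPMap.mem_graph_iff _).mp (hs n)
      rw [← hp1, ← hp2, ← hq1, ← hq2]
      exact (aux_symm (hBn n) p q).symm
    have hu1 : Tendsto (fun n => (u n).1) atTop (𝓝 x1) := (continuous_fst.tendsto _).comp hlim
    have hu2 : Tendsto (fun n => (u n).2) atTop (𝓝 x2) := (continuous_snd.tendsto _).comp hlim
    have hs1 : Tendsto (fun n => (s n).1) atTop (𝓝 ((η : H))) :=
      (continuous_fst.tendsto _).comp hslim
    have hs2 : Tendsto (fun n => (s n).2) atTop (𝓝 (B η)) :=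
      (continuous_snd.tendsto _).comp hslim
    have l1 : Tendsto (fun n => ⟪(u n).1, (s n).2⟫_ℂ) atTop (𝓝 ⟪x1, B η⟫_ℂ) := hu1.inner hs2
    have l2 : Tendsto (fun n => ⟪(u n).2, (s n).1⟫_ℂ) atTop (𝓝 ⟪x2, (η : H)⟫_ℂ) := hu2.inner hs1
    exact tendsto_nhds_unique (l1.congr key) l2
  tfae_have 2 → 3 := fun h2 => h2.subset
  tfae_have 3 → 1 := by
    intro h3 ψ
    obtain ⟨hφm, hφe⟩ := hR ψ
    obtain ⟨s, hs, hslim⟩ := h3 (B.mem_graph ⟨R ψ, hφm⟩)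
    have hs1 : Tendsto (fun n => (s n).1) atTop (𝓝 (R ψ)) := (continuous_fst.tendsto _).comp hslim
    have hs2 : Tendsto (fun n => (s n).2) atTop (𝓝 (B ⟨R ψ, hφm⟩)) :=
      (continuous_snd.tendsto _).comp hslim
    have hψn : Tendsto (fun n => (s n).2 + Complex.I • (s n).1) atTop (𝓝 ψ) := by
      have h := hs2.add (hs1.const_smul Complex.I)
      rwa [hφe] at h
    have hRn_eq : ∀ n, Rn n ((s n).2 + Complex.I • (s n).1) = (s n).1 := by
      intro n
      obtain ⟨p, hp1, hp2⟩ := (LinearPMap.mem_graph_iff _).mp (hs n)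
      rw [← hp1, ← hp2]
      exact aux_res_apply (hBn n) (hRn n) p
    have hlip : ∀ n, ‖Rn n ψ - (s n).1‖ ≤ ‖ψ - ((s n).2 + Complex.I • (s n).1)‖ := by
      intro n
      have h := aux_lip (hBn n) (hRn n) ψ ((s n).2 + Complex.I • (s n).1)
      rwa [hRn_eq n] at h
    have hz : Tendsto (fun n => Rn n ψ - (s n).1) atTop (𝓝 0) := by
      apply squeeze_zero_norm hlip
      have h := (tendsto_const_nhds : Tendsto (fun _ : ℕ => ψ) atTop (𝓝 ψ)).sub hψn
      rw [sub_self] at h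
      simpa using h.norm
    have := hz.add hs1
    simpa using this
  tfae_have 4 → 3 := by
    intro h4 x hx
    have hQx : Q x = x := proj_fix hQ hx
    refine ⟨fun n => Qn n x, fun n => (hQn n x).1, ?_⟩
    have := h4 x
    rwa [hQx] at this
  tfae_have 3 → 4 := by
    intro h3 w
    obtain ⟨s, hs, hslim⟩ := h3 (hQ w).1
    have hperp := aux_perp hB (w - Q w) (fun v hv => (hQ w).2 v hv)
    obtain ⟨t, ht, htlim⟩ := h3 hperp
    set w' : ℕ → H × H := fun n => s n + (-(t n).2, (t n).1) with hw'def
    have ht1 : Tendsto (fun n => (t n).1) atTop (𝓝 ((w - Q w).2)) :=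
      (continuous_fst.tendsto _).comp htlim
    have ht2 : Tendsto (fun n => (t n).2) atTop (𝓝 (-(w - Q w).1)) :=
      (continuous_snd.tendsto _).comp htlim
    have hw'lim : Tendsto w' atTop (𝓝 w) := by
      have hpart : Tendsto (fun n => ((-(t n).2 : H), (t n).1)) atTop
          (𝓝 ((w - Q w).1, (w - Q w).2)) := by
        have := (ht2.neg).prodMk_nhds ht1
        simpa using this
      have h := hslim.add hpart
      have he : Q w + ((w - Q w).1, (w - Q w).2) = w := by
        simp [Prod.ext_iff]
      rw [he] at h
      exact h
    have hproj : ∀ n, Qn n (w' n) = s n := by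
      intro n
      apply proj_unique (hQn n) (hs n)
      intro v hv
      have hsub : w' n - s n = (-(t n).2, (t n).1) := by
        simp [hw'def]
      rw [hsub]
      obtain ⟨q, hq1, hq2⟩ := (LinearPMap.mem_graph_iff _).mp (ht n)
      rw [← hq1, ← hq2]
      exact aux_perp' (hBn n) q v hv
    have key : ∀ n, Qn n w = s n + Qn n (w - w' n) := by
      intro n
      rw [map_sub, hproj n]
      abel
    have hdiff : Tendsto (fun n => w - w' n) atTop (𝓝 0) := by
      have h := (tendsto_const_nhds : Tendsto (fun _ : ℕ => w) atTop (𝓝 w)).sub hw'lim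
      rwa [sub_self] at h
    have hz : Tendsto (fun n => Qn n (w - w' n)) atTop (𝓝 0) := by
      have hd1 : Tendsto (fun n => (w - w' n).1) atTop (𝓝 0) := by
        have := (continuous_fst.tendsto _).comp hdiff
        simpa [Function.comp_def] using this
      have hd2 : Tendsto (fun n => (w - w' n).2) atTop (𝓝 0) := by
        have := (continuous_snd.tendsto _).comp hdiff
        simpa [Function.comp_def] using this
      have hg : Tendsto (fun n => Real.sqrt (‖(w - w' n).1‖ ^ 2 + ‖(w - w' n).2‖ ^ 2)) atTop
          (𝓝 0) := by
        have h1 : Tendsto (fun n => ‖(w - w' n).1‖ ^ 2 + ‖(w - w' n).2‖ ^ 2) atTop (𝓝 0) := by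
          have := ((hd1.norm.pow 2).add (hd2.norm.pow 2))
          simpa using this
        have := (Real.continuous_sqrt.tendsto 0).comp h1
        simpa [Function.comp_def] using this
      have hbound1 : ∀ n, ‖(Qn n (w - w' n)).1‖ ≤
          Real.sqrt (‖(w - w' n).1‖ ^ 2 + ‖(w - w' n).2‖ ^ 2) := by
        intro n
        have hE := proj_E2 (hQn n) (w - w' n)
        have : ‖(Qn n (w - w' n)).1‖ ^ 2 ≤ ‖(w - w' n).1‖ ^ 2 + ‖(w - w' n).2‖ ^ 2 := by
          nlinarith [sq_nonneg ‖(Qn n (w - w' n)).2‖]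
        calc ‖(Qn n (w - w' n)).1‖ = Real.sqrt (‖(Qn n (w - w' n)).1‖ ^ 2) := by
              rw [Real.sqrt_sq (norm_nonneg _)]
          _ ≤ _ := Real.sqrt_le_sqrt this
      have hbound2 : ∀ n, ‖(Qn n (w - w' n)).2‖ ≤
          Real.sqrt (‖(w - w' n).1‖ ^ 2 + ‖(w - w' n).2‖ ^ 2) := by
        intro n
        have hE := proj_E2 (hQn n) (w - w' n)
        have : ‖(Qn n (w - w' n)).2‖ ^ 2 ≤ ‖(w - w' n).1‖ ^ 2 + ‖(w - w' n).2‖ ^ 2 := by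
          nlinarith [sq_nonneg ‖(Qn n (w - w' n)).1‖]
        calc ‖(Qn n (w - w' n)).2‖ = Real.sqrt (‖(Qn n (w - w' n)).2‖ ^ 2) := by
              rw [Real.sqrt_sq (norm_nonneg _)]
          _ ≤ _ := Real.sqrt_le_sqrt this
      have hz1 : Tendsto (fun n => (Qn n (w - w' n)).1) atTop (𝓝 0) :=
        squeeze_zero_norm hbound1 hg
      have hz2 : Tendsto (fun n => (Qn n (w - w' n)).2) atTop (𝓝 0) :=
        squeeze_zero_norm hbound2 hg
      have := hz1.prodMk_nhds hz2
      simpa only [Prod.mk.eta, Prod.mk_zero_zero] using this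
    have hfin := hslim.add hz
    rw [add_zero] at hfin
    exact hfin.congr (fun n => (key n).symm)
  tfae_finish
end
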